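/- arXiv:1301.2425 — 2 statements merged into one kernel-verified Lean document; each statement's English description precedes it below -/
import Mathlib

section
/- There exists a constant c₁ > 0 depending only on n and p (and in particular independent of γ₁ and γ₂) such that for every p-potential F with constants γ₁, γ₂ and induced extra stress S, and for all symmetric matrices B, C ∈ M^{n×n}, one has Σ_{i,j} (S_{ij}(B) − S_{ij}(C)) (B_{ij} − C_{ij}) ≥ c₁ γ₁ (1 + |B|² + |C|²)^{(p−2)/2} |B − C|². -/
open scoped BigOperators

noncomputable section

/-- Frobenius inner product on `n × n` real matrices (represented as functions). -/
def frobInner {n : ℕ} (A B : Fin n → Fin n → ℝ) : ℝ := ∑ i, ∑ j, A i j * B i j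

/-- Frobenius norm. -/
def frobNorm {n : ℕ} (A : Fin n → Fin n → ℝ) : ℝ := Real.sqrt (frobInner A A)

/-- A symmetric matrix. -/
def IsSymmMat {n : ℕ} (A : Fin n → Fin n → ℝ) : Prop := ∀ i j, A i j = A j i

/-- The induced potential `Φ(B) = F(|B|)`. -/
def inducedPot {n : ℕ} (F : ℝ → ℝ) (B : Fin n → Fin n → ℝ) : ℝ := F (frobNorm B)

/-- The extra stress induced by `F`: `S(B) = F'(|B|) B / |B|` for `B ≠ 0`, `S(0) = 0`. -/
def stress {n : ℕ} (F : ℝ → ℝ) (B : Fin n → Fin n → ℝ) : Fin n → Fin n → ℝ :=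
  if B = 0 then 0 else (deriv F (frobNorm B) / frobNorm B) • B

/-- `F` is a `p`-potential with constants `γ₁, γ₂ > 0`. -/
structure IsPPotential (n : ℕ) (p γ₁ γ₂ : ℝ) (F : ℝ → ℝ) : Prop where
  convex : ConvexOn ℝ (Set.Ici (0 : ℝ)) F
  smooth : ContDiffOn ℝ 2 F (Set.Ici (0 : ℝ))
  nonneg : ∀ x : ℝ, 0 ≤ x → 0 ≤ F x
  zero : F 0 = 0
  deriv_zero : deriv F 0 = 0
  gamma₁_pos : 0 < γ₁
  gamma₂_pos : 0 < γ₂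
  lower : ∀ B C : Fin n → Fin n → ℝ, IsSymmMat B → IsSymmMat C →
    γ₁ * (1 + frobNorm B ^ 2) ^ ((p - 2) / 2) * frobNorm C ^ 2 ≤
      iteratedFDeriv ℝ 2 (inducedPot F) B ![C, C]
  upper : ∀ B C D : Fin n → Fin n → ℝ, IsSymmMat B → IsSymmMat C → IsSymmMat D →
    |iteratedFDeriv ℝ 2 (inducedPot F) B ![C, D]| ≤
      γ₂ * (1 + frobNorm B ^ 2) ^ ((p - 2) / 2) * frobNorm C * frobNorm D


namespace Frob
variable {n : ℕ}

def toEuc (A : Fin n → Fin n → ℝ) : EuclideanSpace ℝ (Fin n × Fin n) :=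
  (WithLp.equiv 2 _).symm (fun ij => A ij.1 ij.2)

lemma frobNorm_eq (A : Fin n → Fin n → ℝ) : frobNorm A = ‖toEuc A‖ := by
  rw [EuclideanSpace.norm_eq]
  simp only [frobNorm, frobInner, toEuc, WithLp.equiv_symm_apply, PiLp.toLp_apply, WithLp.ofLp_toLp, Real.norm_eq_abs, sq_abs]
  rw [Fintype.sum_prod_type]
  congr 1
  exact Finset.sum_congr rfl fun i _ => Finset.sum_congr rfl fun j _ => by ring

lemma toEuc_add (A B : Fin n → Fin n → ℝ) : toEuc (A + B) = toEuc A + toEuc B := rfl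
lemma toEuc_sub (A B : Fin n → Fin n → ℝ) : toEuc (A - B) = toEuc A - toEuc B := rfl
lemma toEuc_smul (c : ℝ) (A : Fin n → Fin n → ℝ) : toEuc (c • A) = c • toEuc A := rfl
lemma toEuc_neg (A : Fin n → Fin n → ℝ) : toEuc (-A) = - toEuc A := rfl

lemma frobNorm_nonneg (A : Fin n → Fin n → ℝ) : 0 ≤ frobNorm A := Real.sqrt_nonneg _

lemma frobInner_self_nonneg (A : Fin n → Fin n → ℝ) : 0 ≤ frobInner A A :=
  Finset.sum_nonneg fun i _ => Finset.sum_nonneg fun j _ => mul_self_nonneg _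

lemma frobNorm_sq (A : Fin n → Fin n → ℝ) : frobNorm A ^ 2 = frobInner A A :=
  Real.sq_sqrt (frobInner_self_nonneg A)

lemma frobNorm_pos {A : Fin n → Fin n → ℝ} (hA : A ≠ 0) : 0 < frobNorm A := by
  rw [frobNorm_eq]
  refine norm_pos_iff.mpr (fun h => hA ?_)
  funext i j
  have := congrFun (congrArg (WithLp.equiv 2 _) h) (i, j)
  simpa [toEuc] using this

lemma frobNorm_triangle (A B : Fin n → Fin n → ℝ) :
    frobNorm (A + B) ≤ frobNorm A + frobNorm B := by
  rw [frobNorm_eq, frobNorm_eq, frobNorm_eq, toEuc_add]; exact norm_add_le _ _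

lemma frobNorm_neg (A : Fin n → Fin n → ℝ) : frobNorm (-A) = frobNorm A := by
  rw [frobNorm_eq, frobNorm_eq, toEuc_neg, norm_neg]

lemma frobNorm_smul (c : ℝ) (A : Fin n → Fin n → ℝ) :
    frobNorm (c • A) = |c| * frobNorm A := by
  rw [frobNorm_eq, frobNorm_eq, toEuc_smul, norm_smul, Real.norm_eq_abs]

lemma frobNorm_sub_comm (A B : Fin n → Fin n → ℝ) : frobNorm (A - B) = frobNorm (B - A) := by
  rw [← frobNorm_neg (A - B)]; congr 1; abel

lemma frobInner_smul_left (c : ℝ) (A B : Fin n → Fin n → ℝ) :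
    frobInner (c • A) B = c * frobInner A B := by
  simp [frobInner, Finset.mul_sum, mul_assoc]

lemma frobInner_sub_left (A B C : Fin n → Fin n → ℝ) :
    frobInner (A - B) C = frobInner A C - frobInner B C := by
  simp [frobInner, sub_mul, Finset.sum_sub_distrib]

lemma frobInner_neg_neg (A B : Fin n → Fin n → ℝ) :
    frobInner (-A) (-B) = frobInner A B := by
  simp [frobInner]

end Frob

namespace Frob
variable {n : ℕ}

abbrev Mat (n : ℕ) := Fin n → Fin n → ℝ

/-- coordinate projection as a CLM -/
def projL (i j : Fin n) : Mat n →L[ℝ] ℝ :=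
  (ContinuousLinearMap.proj j).comp (ContinuousLinearMap.proj (R := ℝ)
    (φ := fun _ : Fin n => (Fin n → ℝ)) i)

@[simp] lemma projL_apply (i j : Fin n) (v : Mat n) : projL i j v = v i j := rfl

/-- the CLM `v ↦ frobInner x v` -/
def innerL (x : Mat n) : Mat n →L[ℝ] ℝ := ∑ i, ∑ j, x i j • projL i j

@[simp] lemma innerL_apply (x v : Mat n) : innerL x v = frobInner x v := by
  simp [innerL, frobInner]

lemma hasFDerivAt_sq (x : Mat n) :
    HasFDerivAt (fun y : Mat n => frobInner y y) ((2 : ℝ) • innerL x) x := by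
  have h : ∀ i j : Fin n, HasFDerivAt (fun y : Mat n => y i j * y i j)
      ((2 * x i j) • projL i j) x := by
    intro i j
    have h1 : HasFDerivAt (fun y : Mat n => y i j) (projL i j) x := (projL i j).hasFDerivAt
    have := h1.mul h1
    refine this.congr_fderiv ?_
    ext v
    simp [two_mul, add_mul]
  have hsum : HasFDerivAt (fun y : Mat n => ∑ i, ∑ j, y i j * y i j)
      (∑ i, ∑ j, (2 * x i j) • projL i j) x := by
    apply HasFDerivAt.fun_sum
    intro i _
    exact HasFDerivAt.fun_sum (fun j _ => h i j)
  refine hsum.congr_fderiv ?_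
  ext v
  simp only [ContinuousLinearMap.smul_apply, innerL_apply, ContinuousLinearMap.sum_apply,
    projL_apply, smul_eq_mul, frobInner]
  rw [Finset.mul_sum]
  exact Finset.sum_congr rfl fun i _ => by
    rw [Finset.mul_sum]
    exact Finset.sum_congr rfl fun j _ => by ring

lemma hasFDerivAt_frobNorm {x : Mat n} (hx : x ≠ 0) :
    HasFDerivAt (frobNorm (n := n)) ((frobNorm x)⁻¹ • innerL x) x := by
  have hpos : 0 < frobInner x x := by
    have := frobNorm_pos hx
    rw [← frobNorm_sq]; positivity
  have hs : HasDerivAt Real.sqrt (1 / (2 * Real.sqrt (frobInner x x))) (frobInner x x) :=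
    Real.hasDerivAt_sqrt (ne_of_gt hpos)
  have hcomp : HasFDerivAt (fun y : Mat n => Real.sqrt (frobInner y y))
      ((1 / (2 * Real.sqrt (frobInner x x))) • ((2 : ℝ) • innerL x)) x :=
    HasDerivAt.comp_hasFDerivAt (f := fun y : Mat n => frobInner y y) x hs (hasFDerivAt_sq x)
  have heq : (frobNorm (n := n)) = fun y : Mat n => Real.sqrt (frobInner y y) := rfl
  rw [heq]
  convert hcomp using 1
  ext v
  have h2 : Real.sqrt (frobInner x x) ≠ 0 := by
    rw [← frobNorm]; exact ne_of_gt (frobNorm_pos hx)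
  simp only [ContinuousLinearMap.smul_apply, innerL_apply, smul_eq_mul, frobNorm]
  field_simp

lemma fderiv_inducedPot (F : ℝ → ℝ) (hF : ContDiffOn ℝ 2 F (Set.Ici (0 : ℝ)))
    (x : Mat n) (v : Mat n) :
    fderiv ℝ (inducedPot F) x v = frobInner (stress F x) v := by
  by_cases hx : x = 0
  · subst hx
    have hstress : stress F (0 : Mat n) = 0 := by simp [stress]
    rw [hstress]
    have hrhs : frobInner (0 : Mat n) v = 0 := by simp [frobInner]
    rw [hrhs]
    by_cases hd : DifferentiableAt ℝ (inducedPot F (n := n)) 0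
    · have h1 : HasFDerivAt (inducedPot F (n := n)) (fderiv ℝ (inducedPot F) 0) 0 :=
        hd.hasFDerivAt
      have hneg : HasFDerivAt (fun y : Mat n => -y)
          (-(ContinuousLinearMap.id ℝ (Mat n))) (0 : Mat n) := (hasFDerivAt_id (0 : Mat n)).neg
      have h1' : HasFDerivAt (inducedPot F (n := n)) (fderiv ℝ (inducedPot F) 0)
          (-(0 : Mat n)) := by rw [neg_zero]; exact h1
      have h2 := h1'.comp (0 : Mat n) hneg
      have hfun : (inducedPot F (n := n)) ∘ (fun y : Mat n => -y) = inducedPot F := by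
        funext y
        simp only [Function.comp_apply, inducedPot]
        exact congrArg F (frobNorm_neg y)
      rw [hfun] at h2
      have hL := h1.unique h2
      have hv : fderiv ℝ (inducedPot F) (0 : Mat n) v
          = - fderiv ℝ (inducedPot F) (0 : Mat n) v := by
        conv_lhs => rw [hL]
        simp
      linarith [hv]
    · rw [fderiv_zero_of_not_differentiableAt hd]; simp
  · have hs : 0 < frobNorm x := frobNorm_pos hx
    have hFd : DifferentiableAt ℝ F (frobNorm x) :=
      (hF.differentiableOn (by norm_num)).differentiableAt (Ici_mem_nhds hs)
    have hN : HasFDerivAt (frobNorm (n := n)) ((frobNorm x)⁻¹ • innerL x) x :=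
      hasFDerivAt_frobNorm hx
    have hFh : HasDerivAt F (deriv F (frobNorm x)) (frobNorm x) := hFd.hasDerivAt
    have hcomp := hFh.comp_hasFDerivAt x hN
    have hfd : fderiv ℝ (inducedPot F) x
        = deriv F (frobNorm x) • ((frobNorm x)⁻¹ • innerL x) := hcomp.fderiv
    rw [hfd]
    simp only [ContinuousLinearMap.smul_apply, innerL_apply, smul_eq_mul, stress, if_neg hx,
      frobInner_smul_left]
    rw [div_eq_mul_inv]
    ring

end Frob

namespace Frob
variable {n : ℕ}

/-- a symmetric matrix with Frobenius norm 1 -/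
def unitMat (hn : 1 ≤ n) : Mat n := fun i j =>
  if i = ⟨0, hn⟩ ∧ j = ⟨0, hn⟩ then 1 else 0

lemma unitMat_symm (hn : 1 ≤ n) : IsSymmMat (unitMat hn) := by
  intro i j
  simp only [unitMat]
  by_cases h1 : i = ⟨0, hn⟩ <;> by_cases h2 : j = ⟨0, hn⟩ <;> simp [h1, h2, and_comm]

lemma unitMat_norm (hn : 1 ≤ n) : frobNorm (unitMat hn) = 1 := by
  have : frobInner (unitMat hn) (unitMat hn) = 1 := by
    simp only [frobInner, unitMat]
    rw [Finset.sum_eq_single ⟨0, hn⟩]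
    · rw [Finset.sum_eq_single ⟨0, hn⟩]
      · simp
      · intro j _ hj; simp [hj]
      · intro h; exact absurd (Finset.mem_univ _) h
    · intro i _ hi
      apply Finset.sum_eq_zero
      intro j _
      simp [hi]
    · intro h; exact absurd (Finset.mem_univ _) h
  rw [frobNorm, this, Real.sqrt_one]

lemma diff_fderiv_of_lower {p γ₁ : ℝ} {F : ℝ → ℝ} (hn : 1 ≤ n) (hγ : 0 < γ₁)
    (hlow : ∀ B C : Fin n → Fin n → ℝ, IsSymmMat B → IsSymmMat C →
      γ₁ * (1 + frobNorm B ^ 2) ^ ((p - 2) / 2) * frobNorm C ^ 2 ≤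
        iteratedFDeriv ℝ 2 (inducedPot F) B ![C, C])
    {x : Mat n} (hx : IsSymmMat x) :
    DifferentiableAt ℝ (fderiv ℝ (inducedPot F (n := n))) x := by
  by_contra hnd
  have h0 : fderiv ℝ (fderiv ℝ (inducedPot F (n := n))) x = 0 :=
    fderiv_zero_of_not_differentiableAt hnd
  have h2 := hlow x (unitMat hn) hx (unitMat_symm hn)
  rw [iteratedFDeriv_two_apply] at h2
  rw [h0] at h2
  simp only [Matrix.cons_val_zero, Matrix.cons_val_one, Matrix.head_cons,
    ContinuousLinearMap.zero_apply, unitMat_norm hn, one_pow, mul_one] at h2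
  have hpos : 0 < (1 + frobNorm x ^ 2) ^ ((p - 2) / 2) := by
    apply Real.rpow_pos_of_pos
    have := sq_nonneg (frobNorm x)
    linarith
  nlinarith

end Frob

namespace Frob
variable {n : ℕ}

set_option maxHeartbeats 1600000 in
lemma key_ineq {p γ₁ : ℝ} {F : ℝ → ℝ} (hn : 1 ≤ n) (hγ : 0 < γ₁)
    (hFs : ContDiffOn ℝ 2 F (Set.Ici (0 : ℝ)))
    (hlow : ∀ B C : Fin n → Fin n → ℝ, IsSymmMat B → IsSymmMat C →
      γ₁ * (1 + frobNorm B ^ 2) ^ ((p - 2) / 2) * frobNorm C ^ 2 ≤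
        iteratedFDeriv ℝ 2 (inducedPot F) B ![C, C])
    (B C : Mat n) (hB : IsSymmMat B) (hC : IsSymmMat C) (hBC : frobNorm C ≤ frobNorm B) :
    (1/4) * min 1 ((8:ℝ) ^ ((2 - p)/2)) * γ₁
        * (1 + frobNorm B ^ 2 + frobNorm C ^ 2) ^ ((p - 2)/2) * frobNorm (B - C) ^ 2 ≤
      frobInner (stress F B - stress F C) (B - C) := by
  set G : Mat n := B - C with hGdef
  set x : ℝ → Mat n := fun t => C + t • G with hxdef
  set W : ℝ := (1 + frobNorm B ^ 2 + frobNorm C ^ 2) ^ ((p - 2)/2) with hWdef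
  set s : ℝ := min 1 ((8:ℝ) ^ ((2 - p)/2)) with hsdef
  set m : ℝ := γ₁ * (s * W) * frobNorm G ^ 2 with hmdef
  have hG : IsSymmMat G := by
    intro i j
    simp only [hGdef, Pi.sub_apply]
    rw [hB i j, hC i j]
  have hxs : ∀ t : ℝ, IsSymmMat (x t) := by
    intro t i j
    simp only [hxdef, Pi.add_apply, Pi.smul_apply, smul_eq_mul]
    rw [hC i j, hG i j]
  have hx1 : x 1 = B := by
    funext i j
    simp [hxdef, hGdef]
  have hx0 : x 0 = C := by
    funext i j
    simp [hxdef]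
  -- the path derivative
  have hxd : ∀ t : ℝ, HasDerivAt x G t := by
    intro t
    have h1 : HasDerivAt (fun y : ℝ => y • G) ((1:ℝ) • G) t := (hasDerivAt_id t).smul_const G
    have := h1.const_add C
    rw [one_smul] at this; exact this
  set φ : ℝ → ℝ := fun t => fderiv ℝ (inducedPot F) (x t) G with hφdef
  set q : ℝ → ℝ := fun t => iteratedFDeriv ℝ 2 (inducedPot F) (x t) ![G, G] with hqdef
  have hφ : ∀ t : ℝ, HasDerivAt φ (q t) t := by
    intro t
    have hd : DifferentiableAt ℝ (fderiv ℝ (inducedPot F (n := n))) (x t) :=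
      diff_fderiv_of_lower hn hγ hlow (hxs t)
    have hψ : HasDerivAt (fun t => fderiv ℝ (inducedPot F) (x t))
        (fderiv ℝ (fderiv ℝ (inducedPot F)) (x t) G) t :=
      hd.hasFDerivAt.comp_hasDerivAt t (hxd t)
    have happ := hψ.clm_apply (hasDerivAt_const t G)
    have hq2 : q t = fderiv ℝ (fderiv ℝ (inducedPot F)) (x t) G G := by
      show iteratedFDeriv ℝ 2 (inducedPot F) (x t) ![G, G] = _
      rw [iteratedFDeriv_two_apply]
      simp
    rw [hq2]
    simpa using happ
  have hq_low : ∀ t : ℝ, γ₁ * (1 + frobNorm (x t) ^ 2) ^ ((p - 2) / 2) * frobNorm G ^ 2 ≤ q t :=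
    fun t => hlow (x t) G (hxs t) hG
  have hq0 : ∀ t : ℝ, 0 ≤ q t := by
    intro t
    refine le_trans ?_ (hq_low t)
    have h1 : (0:ℝ) < (1 + frobNorm (x t) ^ 2) ^ ((p - 2) / 2) := by
      apply Real.rpow_pos_of_pos
      nlinarith [sq_nonneg (frobNorm (x t))]
    positivity
  -- norm bounds along the path
  have hGnorm : frobNorm G ≤ 2 * frobNorm B := by
    have h1 : frobNorm G ≤ frobNorm B + frobNorm (-C) := by
      have := frobNorm_triangle B (-C)
      simpa [hGdef, sub_eq_add_neg] using this
    rw [frobNorm_neg] at h1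
    linarith
  have hub : ∀ t ∈ Set.Icc (0:ℝ) 1, frobNorm (x t) ≤ frobNorm B := by
    intro t ht
    have hrepr : x t = (1 - t) • C + t • B := by
      funext i j
      simp only [hxdef, hGdef, Pi.add_apply, Pi.smul_apply, Pi.sub_apply, smul_eq_mul]
      ring
    rw [hrepr]
    calc frobNorm ((1 - t) • C + t • B) ≤ frobNorm ((1 - t) • C) + frobNorm (t • B) :=
          frobNorm_triangle _ _
      _ = |1 - t| * frobNorm C + |t| * frobNorm B := by rw [frobNorm_smul, frobNorm_smul]
      _ ≤ frobNorm B := by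
          rw [abs_of_nonneg (by linarith [ht.2] : (0:ℝ) ≤ 1 - t), abs_of_nonneg ht.1]
          nlinarith [ht.1, ht.2, frobNorm_nonneg C, frobNorm_nonneg B, hBC]
  have hlb : ∀ t ∈ Set.Icc (3/4:ℝ) 1, frobNorm B / 2 ≤ frobNorm (x t) := by
    intro t ht
    have hrepr : B = x t + (1 - t) • G := by
      funext i j
      simp only [hxdef, hGdef, Pi.add_apply, Pi.smul_apply, Pi.sub_apply, smul_eq_mul]
      ring
    have h1 : frobNorm B ≤ frobNorm (x t) + |1 - t| * frobNorm G := by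
      calc frobNorm B = frobNorm (x t + (1 - t) • G) := by rw [← hrepr]
        _ ≤ frobNorm (x t) + frobNorm ((1 - t) • G) := frobNorm_triangle _ _
        _ = frobNorm (x t) + |1 - t| * frobNorm G := by rw [frobNorm_smul]
    rw [abs_of_nonneg (by linarith [ht.2] : (0:ℝ) ≤ 1 - t)] at h1
    have h2 : (1 - t) * frobNorm G ≤ (1/4) * (2 * frobNorm B) := by
      apply mul_le_mul (by linarith [ht.1]) hGnorm (frobNorm_nonneg G) (by norm_num)
    linarith
  -- key pointwise bound on [3/4, 1]
  have hWnonneg : 0 ≤ W := Real.rpow_nonneg (by nlinarith [sq_nonneg (frobNorm B), sq_nonneg (frobNorm C)]) _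
  have hm : ∀ t ∈ Set.Icc (3/4:ℝ) 1, m ≤ q t := by
    intro t ht
    refine le_trans ?_ (hq_low t)
    have hkey : s * W ≤ (1 + frobNorm (x t) ^ 2) ^ ((p - 2) / 2) := by
      have hxt01 : t ∈ Set.Icc (0:ℝ) 1 := ⟨by linarith [ht.1], ht.2⟩
      have hx_ub : frobNorm (x t) ^ 2 ≤ frobNorm B ^ 2 :=
        pow_le_pow_left₀ (frobNorm_nonneg _) (hub t hxt01) 2
      have hpos_xt : (0:ℝ) < 1 + frobNorm (x t) ^ 2 := by nlinarith [sq_nonneg (frobNorm (x t))]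
      rcases le_total p 2 with hp2 | hp2
      · -- p ≤ 2 : exponent nonpositive
        have h1 : (1 + frobNorm B ^ 2 + frobNorm C ^ 2) ^ ((p - 2)/2)
            ≤ (1 + frobNorm (x t) ^ 2) ^ ((p - 2) / 2) := by
          apply Real.rpow_le_rpow_of_nonpos hpos_xt
          · nlinarith [sq_nonneg (frobNorm C)]
          · linarith
        calc s * W ≤ 1 * W := by
              apply mul_le_mul_of_nonneg_right (min_le_left _ _) hWnonneg
          _ = W := one_mul W
          _ ≤ _ := h1
      · -- 2 ≤ p : exponent nonnegative
        have he : 0 ≤ (p - 2)/2 := by linarith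
        have hx_lb : frobNorm B ^ 2 / 4 ≤ frobNorm (x t) ^ 2 := by
          have h1 := hlb t ht
          have h2 : (frobNorm B / 2) ^ 2 ≤ frobNorm (x t) ^ 2 :=
            pow_le_pow_left₀ (by linarith [frobNorm_nonneg B]) h1 2
          calc frobNorm B ^ 2 / 4 = (frobNorm B / 2) ^ 2 := by ring
            _ ≤ _ := h2
        have hC2 : frobNorm C ^ 2 ≤ frobNorm B ^ 2 :=
          pow_le_pow_left₀ (frobNorm_nonneg _) hBC 2
        have hdiv : (1 + frobNorm B ^ 2 + frobNorm C ^ 2) / 8 ≤ 1 + frobNorm (x t) ^ 2 := by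
          nlinarith
        have h1 : ((1 + frobNorm B ^ 2 + frobNorm C ^ 2) / 8) ^ ((p - 2)/2)
            ≤ (1 + frobNorm (x t) ^ 2) ^ ((p - 2)/2) := by
          apply Real.rpow_le_rpow (by positivity) hdiv he
        have h2 : ((1 + frobNorm B ^ 2 + frobNorm C ^ 2) / 8) ^ ((p - 2)/2)
            = (8:ℝ) ^ ((2 - p)/2) * W := by
          rw [Real.div_rpow (by nlinarith [sq_nonneg (frobNorm B), sq_nonneg (frobNorm C)])
            (by norm_num : (0:ℝ) ≤ 8)]
          rw [hWdef]
          rw [show ((2 - p)/2) = -((p - 2)/2) by ring]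
          rw [Real.rpow_neg (by norm_num : (0:ℝ) ≤ 8)]
          field_simp
        calc s * W ≤ (8:ℝ) ^ ((2 - p)/2) * W := by
              apply mul_le_mul_of_nonneg_right (min_le_right _ _) hWnonneg
          _ = ((1 + frobNorm B ^ 2 + frobNorm C ^ 2) / 8) ^ ((p - 2)/2) := h2.symm
          _ ≤ _ := h1
    calc m = γ₁ * (s * W) * frobNorm G ^ 2 := hmdef
      _ ≤ γ₁ * ((1 + frobNorm (x t) ^ 2) ^ ((p - 2) / 2)) * frobNorm G ^ 2 := by
          apply mul_le_mul_of_nonneg_right _ (sq_nonneg _)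
          exact mul_le_mul_of_nonneg_left hkey (le_of_lt hγ)
      _ ≤ _ := le_refl _
  -- monotonicity arguments
  have hφdiff : Differentiable ℝ φ := fun t => (hφ t).differentiableAt
  have hφmono : Monotone φ :=
    monotone_of_deriv_nonneg hφdiff (fun t => by rw [(hφ t).deriv]; exact hq0 t)
  set ρ : ℝ → ℝ := fun t => φ t - m * t with hρdef
  have hρ : ∀ t : ℝ, HasDerivAt ρ (q t - m) t := by
    intro t
    have h1 : HasDerivAt (fun y : ℝ => m * y) (m * 1) t := (hasDerivAt_id t).const_mul m
    have := (hφ t).sub h1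
    simp only [mul_one] at this; exact this
  have hρdiff : Differentiable ℝ ρ := fun t => (hρ t).differentiableAt
  have hρmono : MonotoneOn ρ (Set.Icc (3/4:ℝ) 1) := by
    apply monotoneOn_of_deriv_nonneg (convex_Icc _ _) hρdiff.continuous.continuousOn
      hρdiff.differentiableOn
    intro t htint
    rw [(hρ t).deriv]
    have ht : t ∈ Set.Icc (3/4:ℝ) 1 := interior_subset htint
    linarith [hm t ht]
  have h34 : ρ (3/4) ≤ ρ 1 := hρmono (Set.mem_Icc.mpr ⟨by norm_num, by norm_num⟩)
      (Set.mem_Icc.mpr ⟨by norm_num, by norm_num⟩) (by norm_num)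
  have hφ34 : φ 0 ≤ φ (3/4) := hφmono (by norm_num)
  have hstep : m / 4 ≤ φ 1 - φ 0 := by
    have h34' : φ (3/4) - m * (3/4) ≤ φ 1 - m * 1 := h34
    linarith
  -- identify endpoints
  have hφ1 : φ 1 = frobInner (stress F B) G := by
    rw [hφdef]
    simp only [hx1]
    exact fderiv_inducedPot F hFs B G
  have hφ0 : φ 0 = frobInner (stress F C) G := by
    rw [hφdef]
    simp only [hx0]
    exact fderiv_inducedPot F hFs C G
  have hfinal : m / 4 ≤ frobInner (stress F B - stress F C) G := by
    rw [frobInner_sub_left]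
    rw [hφ1, hφ0] at hstep
    exact hstep
  have hmeq : m / 4 = (1/4) * s * γ₁ * W * frobNorm G ^ 2 := by
    rw [hmdef]; ring
  rw [hmeq] at hfinal
  exact hfinal

end Frob

/-- Strong monotonicity of the extra stress: there is `c₁ > 0` depending only on `n` and `p`
(independent of `γ₁, γ₂`) such that for every `p`-potential `F` and all symmetric `B, C`,
`(S(B) - S(C)) : (B - C) ≥ c₁ γ₁ (1 + |B|² + |C|²)^((p-2)/2) |B - C|²`. -/
theorem stress_strong_monotonicity (n : ℕ) (hn : 1 ≤ n) (p : ℝ) (hp : 1 < p) :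
    ∃ c₁ : ℝ, 0 < c₁ ∧ ∀ (γ₁ γ₂ : ℝ) (F : ℝ → ℝ), IsPPotential n p γ₁ γ₂ F →
      ∀ B C : Fin n → Fin n → ℝ, IsSymmMat B → IsSymmMat C →
        c₁ * γ₁ * (1 + frobNorm B ^ 2 + frobNorm C ^ 2) ^ ((p - 2) / 2)
            * frobNorm (B - C) ^ 2 ≤
          frobInner (stress F B - stress F C) (B - C) := by
  refine ⟨(1/4) * min 1 ((8:ℝ) ^ ((2 - p)/2)), ?_, ?_⟩
  · have h8 : (0:ℝ) < (8:ℝ) ^ ((2 - p)/2) := Real.rpow_pos_of_pos (by norm_num) _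
    have hmin : (0:ℝ) < min 1 ((8:ℝ) ^ ((2 - p)/2)) := lt_min one_pos h8
    linarith
  · intro γ₁ γ₂ F hF B C hB hC
    rcases le_total (frobNorm C) (frobNorm B) with h | h
    · exact Frob.key_ineq hn hF.gamma₁_pos hF.smooth hF.lower B C hB hC h
    · have hkey := Frob.key_ineq hn hF.gamma₁_pos hF.smooth hF.lower C B hC hB h
      rw [Frob.frobNorm_sub_comm C B] at hkey
      rw [show (1 + frobNorm C ^ 2 + frobNorm B ^ 2)
          = (1 + frobNorm B ^ 2 + frobNorm C ^ 2) by ring] at hkey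
      have h2 : frobInner (stress F C - stress F B) (C - B)
          = frobInner (stress F B - stress F C) (B - C) := by
        rw [← Frob.frobInner_neg_neg (stress F B - stress F C) (B - C), neg_sub, neg_sub]
      rw [h2] at hkey
      exact hkey
end
end

section
/- There exists a constant c₁ > 0 depending only on n and p (and in particular independent of γ₁ and γ₂) such that for every p-potential F with constants γ₁, γ₂ and induced extra stress S, and for every symmetric matrix B ∈ M^{n×n}, one has Σ_{i,j} S_{ij}(B) B_{ij} ≥ c₁ γ₁ (1 + |B|²)^{(p−2)/2} |B|². -/
open scoped BigOperators
open Filter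

noncomputable section

lemma frobInner_self_nonneg {n : ℕ} (A : Fin n → Fin n → ℝ) : 0 ≤ frobInner A A :=
  Finset.sum_nonneg fun i _ => Finset.sum_nonneg fun j _ => mul_self_nonneg _

lemma frobNorm_nonneg {n : ℕ} (A : Fin n → Fin n → ℝ) : 0 ≤ frobNorm A := Real.sqrt_nonneg _

lemma sq_frobNorm {n : ℕ} (A : Fin n → Fin n → ℝ) : frobNorm A ^ 2 = frobInner A A :=
  Real.sq_sqrt (frobInner_self_nonneg A)

lemma frobInner_smul_left {n : ℕ} (c : ℝ) (A B : Fin n → Fin n → ℝ) :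
    frobInner (c • A) B = c * frobInner A B := by
  simp [frobInner, Finset.mul_sum, mul_assoc]

lemma frobInner_smul_smul {n : ℕ} (c : ℝ) (A : Fin n → Fin n → ℝ) :
    frobInner (c • A) (c • A) = c ^ 2 * frobInner A A := by
  simp [frobInner, Finset.mul_sum]; ring_nf

lemma frobNorm_smul {n : ℕ} {c : ℝ} (hc : 0 ≤ c) (A : Fin n → Fin n → ℝ) :
    frobNorm (c • A) = c * frobNorm A := by
  rw [frobNorm, frobInner_smul_smul, Real.sqrt_mul (sq_nonneg c), Real.sqrt_sq hc, frobNorm]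

lemma frobInner_self_pos {n : ℕ} {A : Fin n → Fin n → ℝ} (hA : A ≠ 0) :
    0 < frobInner A A := by
  rcases (frobInner_self_nonneg A).lt_or_eq with h | h
  · exact h
  exfalso; apply hA; funext i j
  have h1 : ∀ k ∈ Finset.univ, (0:ℝ) ≤ ∑ l, A k l * A k l :=
    fun k _ => Finset.sum_nonneg fun l _ => mul_self_nonneg _
  have h2 : ∑ l, A i l * A i l ≤ frobInner A A := Finset.single_le_sum h1 (Finset.mem_univ i)
  have h3 : A i j * A i j ≤ ∑ l, A i l * A i l :=
    Finset.single_le_sum (fun l _ => mul_self_nonneg (A i l)) (Finset.mem_univ j)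
  have : A i j * A i j ≤ 0 := by rw [← h] at h2; linarith
  have := mul_self_nonneg (A i j)
  have : A i j * A i j = 0 := le_antisymm ‹A i j * A i j ≤ 0› ‹0 ≤ A i j * A i j›
  simpa [mul_self_eq_zero] using this

lemma frobNorm_pos {n : ℕ} {A : Fin n → Fin n → ℝ} (hA : A ≠ 0) : 0 < frobNorm A :=
  Real.sqrt_pos.2 (frobInner_self_pos hA)

lemma contDiff_frobSq {n : ℕ} : ContDiff ℝ 2 (fun A : Fin n → Fin n → ℝ => frobInner A A) := by
  unfold frobInner
  apply ContDiff.sum; intro i _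
  apply ContDiff.sum; intro j _
  have h : ContDiff ℝ 2 (fun A : Fin n → Fin n → ℝ => A i j) :=
    ((ContinuousLinearMap.proj j).comp (ContinuousLinearMap.proj (R := ℝ)
      (φ := fun _ : Fin n => Fin n → ℝ) i)).contDiff
  exact h.mul h

section Bzero
variable {n : ℕ} (hn : 1 ≤ n)

def Bz (n : ℕ) (hn : 1 ≤ n) : Fin n → Fin n → ℝ :=
  fun i j => if i = ⟨0, hn⟩ ∧ j = ⟨0, hn⟩ then 1 else 0

lemma Bz_symm : IsSymmMat (Bz n hn) := by
  intro i j; unfold Bz; by_cases h1 : i = (⟨0,hn⟩ : Fin n) <;> by_cases h2 : j = (⟨0,hn⟩ : Fin n) <;> simp [h1, h2]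

lemma Bz_inner : frobInner (Bz n hn) (Bz n hn) = 1 := by
  unfold frobInner Bz
  have : ∀ i j : Fin n, ((if i = ⟨0, hn⟩ ∧ j = ⟨0, hn⟩ then (1:ℝ) else 0) *
      (if i = ⟨0, hn⟩ ∧ j = ⟨0, hn⟩ then (1:ℝ) else 0)) =
      (if j = ⟨0, hn⟩ then (if i = ⟨0, hn⟩ then (1:ℝ) else 0) else 0) := by
    intro i j; by_cases h1 : i = (⟨0,hn⟩ : Fin n) <;> by_cases h2 : j = (⟨0,hn⟩ : Fin n) <;> simp [h1, h2]
  simp only [this]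
  simp [Finset.sum_ite_eq']

lemma Bz_norm : frobNorm (Bz n hn) = 1 := by
  rw [frobNorm, Bz_inner, Real.sqrt_one]
end Bzero

lemma second_deriv_lower {n : ℕ} (hn : 1 ≤ n) {p γ₁ γ₂ : ℝ} {F : ℝ → ℝ}
    (hF : IsPPotential n p γ₁ γ₂ F) {s : ℝ} (hs : 0 < s) :
    γ₁ * (1 + s ^ 2) ^ ((p - 2) / 2) ≤ deriv (deriv F) s := by
  set B₀ := Bz n hn with hB₀
  set x : Fin n → Fin n → ℝ := s • B₀ with hx
  have hxsymm : IsSymmMat x := fun i j => by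
    simp only [hx, Pi.smul_apply, smul_eq_mul]
    rw [hB₀, Bz_symm hn i j]
  have hxnorm : frobNorm x = s := by rw [hx, frobNorm_smul hs.le, Bz_norm, mul_one]
  -- smoothness of inducedPot at x
  have hQ : ContDiff ℝ 2 (fun A : Fin n → Fin n → ℝ => frobInner A A) := contDiff_frobSq
  have hQx : frobInner x x ≠ 0 := by
    rw [hx, frobInner_smul_smul, Bz_inner]
    positivity
  have hN : ContDiffAt ℝ 2 (frobNorm (n := n)) x := by
    have h2 := ContDiffAt.comp (g := Real.sqrt) (f := fun A : Fin n → Fin n → ℝ => frobInner A A) x (Real.contDiffAt_sqrt hQx) hQ.contDiffAt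
    exact h2
  have hFs : ContDiffAt ℝ 2 F s := hF.smooth.contDiffAt (Ici_mem_nhds hs)
  have hΦ : ContDiffAt ℝ 2 (inducedPot F (n := n)) x := by
    have := (hxnorm ▸ hFs).comp x hN
    exact this
  set A := fderiv ℝ (fderiv ℝ (inducedPot F (n := n))) x with hA
  have hAd : HasFDerivAt (fderiv ℝ (inducedPot F (n := n))) A x := by
    have h1 : ContDiffAt ℝ 1 (fderiv ℝ (inducedPot F (n := n))) x :=
      hΦ.fderiv_right (le_refl _)
    exact (h1.differentiableAt one_ne_zero).hasFDerivAt
  -- the line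
  set L : ℝ → (Fin n → Fin n → ℝ) := fun u => x + u • B₀ with hL
  have hLder : ∀ u : ℝ, HasDerivAt L B₀ u := by
    intro u
    have h1 : HasDerivAt (fun u : ℝ => u • B₀) ((1:ℝ) • B₀) u :=
      (hasDerivAt_id u).smul_const B₀
    simpa [hL, one_smul] using h1.const_add x
  have hL0 : L 0 = x := by simp [hL]
  have hLval : ∀ u : ℝ, L u = (s + u) • B₀ := by
    intro u; rw [hL, hx]; simp [add_smul]
  have hLnorm : ∀ u : ℝ, -s < u → frobNorm (L u) = s + u := by
    intro u hu; rw [hLval, frobNorm_smul (by linarith), Bz_norm, mul_one]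
  have hLcont : Filter.Tendsto L (nhds 0) (nhds x) := by
    have := (hLder 0).continuousAt.tendsto
    rwa [hL0] at this
  -- step 1: eventually the directional derivative equals deriv F (s + u)
  have hev : ∀ᶠ u in nhds 0, fderiv ℝ (inducedPot F (n := n)) (L u) B₀ = deriv F (s + u) := by
    have hev1 : ∀ᶠ u in nhds 0, ContDiffAt ℝ 2 (inducedPot F (n := n)) (L u) :=
      hLcont.eventually (hΦ.eventually (by norm_num))
    have hev2 : ∀ᶠ u in nhds 0, -s < u ∧ u < s := by
      have : Set.Ioo (-s) s ∈ nhds (0:ℝ) := Ioo_mem_nhds (by linarith) hs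
      filter_upwards [this] with u hu using ⟨hu.1, hu.2⟩
    filter_upwards [hev1.eventually_nhds, hev2.eventually_nhds] with u hu1 hu2
    -- at this u, the curve v ↦ inducedPot F (L v) has derivative value fderiv ... B₀
    have hdiff : DifferentiableAt ℝ (inducedPot F (n := n)) (L u) :=
      (hu1.self_of_nhds).differentiableAt (by norm_num)
    have hcurve : HasDerivAt (fun v => inducedPot F (L v))
        (fderiv ℝ (inducedPot F (n := n)) (L u) B₀) u :=
      hdiff.hasFDerivAt.comp_hasDerivAt u (hLder u)
    -- the curve equals fun v => F (s + v) near u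
    have heq : (fun v => inducedPot F (L v)) =ᶠ[nhds u] (fun v => F (s + v)) := by
      filter_upwards [hu2] with v hv
      rw [inducedPot, hLnorm v hv.1]
    -- F has a derivative at s + u
    have hu2' := hu2.self_of_nhds
    have hFd : DifferentiableAt ℝ F (s + u) :=
      (hF.smooth.contDiffAt (Ici_mem_nhds (by linarith [hu2'.1]))).differentiableAt (by norm_num)
    have hshift : HasDerivAt (fun v : ℝ => F (s + v)) (deriv F (s + u)) u := by
      have h1 : HasDerivAt (fun v : ℝ => s + v) 1 u := by
        simpa using (hasDerivAt_id u).const_add s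
      simpa [Function.comp_def] using (hFd.hasDerivAt.comp u h1)
    have hcurve' : HasDerivAt (fun v => F (s + v))
        (fderiv ℝ (inducedPot F (n := n)) (L u) B₀) u := by
      rwa [heq.hasDerivAt_iff] at hcurve
    exact hcurve'.unique hshift
  -- step 2: A B₀ B₀ is the derivative of u ↦ fderiv Φ (L u) B₀ at 0
  have h2 : HasDerivAt (fun u => fderiv ℝ (inducedPot F (n := n)) (L u)) (A B₀) 0 := by
    have hAd' : HasFDerivAt (fderiv ℝ (inducedPot F (n := n))) A (L 0) := by
      rw [hL0]; exact hAd
    exact hAd'.comp_hasDerivAt 0 (hLder 0)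
  have h3 : HasDerivAt (fun u => fderiv ℝ (inducedPot F (n := n)) (L u) B₀) (A B₀ B₀) 0 := by
    have := h2.clm_apply (hasDerivAt_const (0:ℝ) B₀)
    simpa using this
  have h4 : HasDerivAt (fun u => deriv F (s + u)) (A B₀ B₀) 0 := by
    rwa [Filter.EventuallyEq.hasDerivAt_iff (hev : _ =ᶠ[nhds (0:ℝ)] _)] at h3
  have hdF : ContDiffOn ℝ 1 (deriv F) (Set.Ioi 0) :=
    (hF.smooth.mono Set.Ioi_subset_Ici_self).deriv_of_isOpen isOpen_Ioi (by norm_num)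
  have hdFs : HasDerivAt (deriv F) (deriv (deriv F) s) s :=
    ((hdF.contDiffAt (Ioi_mem_nhds hs)).differentiableAt one_ne_zero).hasDerivAt
  have h5 : HasDerivAt (fun u => deriv F (s + u)) (deriv (deriv F) s) 0 := by
    have h1 : HasDerivAt (fun v : ℝ => s + v) 1 0 := by
      simpa using (hasDerivAt_id (0:ℝ)).const_add s
    have hdFs' : HasDerivAt (deriv F) (deriv (deriv F) s) ((fun v : ℝ => s + v) 0) := by
      simpa using hdFs
    simpa [Function.comp_def] using hdFs'.comp 0 h1
  have h6 : A B₀ B₀ = deriv (deriv F) s := h4.unique h5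
  have hlow := hF.lower x B₀ hxsymm (Bz_symm hn)
  rw [iteratedFDeriv_two_apply] at hlow
  simp only [Matrix.cons_val_zero, Matrix.cons_val_one, Matrix.head_cons, ← hA] at hlow
  rw [hxnorm, Bz_norm hn, one_pow, mul_one] at hlow
  rw [← h6]
  exact hlow

lemma deriv_F_nonneg {n : ℕ} {p γ₁ γ₂ : ℝ} {F : ℝ → ℝ}
    (hF : IsPPotential n p γ₁ γ₂ F) {a : ℝ} (ha : 0 < a) : 0 ≤ deriv F a := by
  have hFa : HasDerivAt F (deriv F a) a :=
    ((hF.smooth.contDiffAt (Ici_mem_nhds ha)).differentiableAt (by norm_num)).hasDerivAt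
  have hsub : Set.Ioi a ⊆ {a}ᶜ := fun b hb => by
    simp only [Set.mem_compl_iff, Set.mem_singleton_iff]
    exact ne_of_gt hb
  have htend : Tendsto (slope F a) (nhdsWithin a (Set.Ioi a)) (nhds (deriv F a)) :=
    (hasDerivAt_iff_tendsto_slope.1 hFa).mono_left (nhdsWithin_mono a hsub)
  refine ge_of_tendsto htend ?_
  filter_upwards [self_mem_nhdsWithin] with b hb
  have hab : a < b := hb
  rw [slope_def_field]
  have hmono : (F a - F 0) / (a - 0) ≤ (F b - F a) / (b - a) :=
    hF.convex.slope_mono_adjacent (Set.self_mem_Ici) (by linarith : (0:ℝ) ≤ b) ha hab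
  have h0 : 0 ≤ (F a - F 0) / (a - 0) := by
    rw [hF.zero]
    apply div_nonneg (by simpa using hF.nonneg a ha.le) (by linarith)
  linarith

lemma key_rpow_bound {p t ξ : ℝ} (ht : 0 < t) (hξ1 : t / 2 ≤ ξ) (hξ2 : ξ ≤ t) :
    min 1 ((2:ℝ) ^ (2 - p)) * (1 + t ^ 2) ^ ((p - 2) / 2) ≤ (1 + ξ ^ 2) ^ ((p - 2) / 2) := by
  have hξ0 : 0 ≤ ξ := by linarith
  have h1t : (0:ℝ) < 1 + t ^ 2 := by positivity
  have h1ξ : (0:ℝ) < 1 + ξ ^ 2 := by positivity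
  rcases le_total p 2 with hp2 | hp2
  · -- exponent nonpositive
    have he : (p - 2) / 2 ≤ 0 := by linarith
    have hle : 1 + ξ ^ 2 ≤ 1 + t ^ 2 := by nlinarith
    have h2 : (1 + t ^ 2) ^ ((p - 2) / 2) ≤ (1 + ξ ^ 2) ^ ((p - 2) / 2) :=
      Real.rpow_le_rpow_of_nonpos h1ξ hle he
    calc min 1 ((2:ℝ) ^ (2 - p)) * (1 + t ^ 2) ^ ((p - 2) / 2)
        ≤ 1 * (1 + t ^ 2) ^ ((p - 2) / 2) :=
          mul_le_mul_of_nonneg_right (min_le_left _ _) (Real.rpow_pos_of_pos h1t _).le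
      _ = (1 + t ^ 2) ^ ((p - 2) / 2) := one_mul _
      _ ≤ _ := h2
  · -- exponent nonnegative
    have he : 0 ≤ (p - 2) / 2 := by linarith
    have hle : (1 + t ^ 2) / 4 ≤ 1 + ξ ^ 2 := by nlinarith
    have h2 : ((1 + t ^ 2) / 4) ^ ((p - 2) / 2) ≤ (1 + ξ ^ 2) ^ ((p - 2) / 2) :=
      Real.rpow_le_rpow (by positivity) hle he
    have h3 : ((1 + t ^ 2) / 4) ^ ((p - 2) / 2)
        = (1 + t ^ 2) ^ ((p - 2) / 2) * (2:ℝ) ^ (2 - p) := by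
      rw [Real.div_rpow h1t.le (by norm_num : (0:ℝ) ≤ 4)]
      have h4 : (4:ℝ) ^ ((p - 2) / 2) = (2:ℝ) ^ (p - 2) := by
        rw [show (4:ℝ) = (2:ℝ) ^ (2:ℝ) by
            rw [show (2:ℝ) = ((2:ℕ):ℝ) by norm_num, Real.rpow_natCast]; norm_num,
          ← Real.rpow_mul (by norm_num : (0:ℝ) ≤ 2)]
        congr 1; ring
      rw [h4, show (2:ℝ) - p = -(p - 2) by ring, Real.rpow_neg (by norm_num : (0:ℝ) ≤ 2)]
      rw [div_eq_mul_inv]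
    calc min 1 ((2:ℝ) ^ (2 - p)) * (1 + t ^ 2) ^ ((p - 2) / 2)
        ≤ (2:ℝ) ^ (2 - p) * (1 + t ^ 2) ^ ((p - 2) / 2) :=
          mul_le_mul_of_nonneg_right (min_le_right _ _) (Real.rpow_pos_of_pos h1t _).le
      _ = ((1 + t ^ 2) / 4) ^ ((p - 2) / 2) := by rw [h3]; ring
      _ ≤ _ := h2

/-- Coercivity of the extra stress: there is `c₁ > 0` depending only on `n` and `p`
(independent of `γ₁, γ₂`) such that for every `p`-potential `F` and every symmetric `B`,
`S(B) : B ≥ c₁ γ₁ (1 + |B|²)^((p-2)/2) |B|²`. -/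
theorem stress_coercivity (n : ℕ) (hn : 1 ≤ n) (p : ℝ) (hp : 1 < p) :
    ∃ c₁ : ℝ, 0 < c₁ ∧ ∀ (γ₁ γ₂ : ℝ) (F : ℝ → ℝ), IsPPotential n p γ₁ γ₂ F →
      ∀ B : Fin n → Fin n → ℝ, IsSymmMat B →
        c₁ * γ₁ * (1 + frobNorm B ^ 2) ^ ((p - 2) / 2) * frobNorm B ^ 2 ≤
          frobInner (stress F B) B := by
  refine ⟨min 1 ((2:ℝ) ^ (2 - p)) / 2, by positivity, ?_⟩
  intro γ₁ γ₂ F hF B hB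
  by_cases hB0 : B = 0
  · subst hB0
    have h0 : frobNorm (0 : Fin n → Fin n → ℝ) = 0 := by
      simp [frobNorm, frobInner]
    simp [stress, h0, frobInner]
  · set t := frobNorm B with htdef
    have ht : 0 < t := frobNorm_pos hB0
    have hγ := hF.gamma₁_pos
    set X := (1 + t ^ 2) ^ ((p - 2) / 2) with hX
    have hXpos : 0 < X := Real.rpow_pos_of_pos (by positivity) _
    -- continuity and differentiability of deriv F on (0, ∞)
    have hdF : ContDiffOn ℝ 1 (deriv F) (Set.Ioi 0) :=
      (hF.smooth.mono Set.Ioi_subset_Ici_self).deriv_of_isOpen isOpen_Ioi (by norm_num)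
    have hcont : ContinuousOn (deriv F) (Set.Icc (t/2) t) :=
      hdF.continuousOn.mono (fun y hy => by
        simp only [Set.mem_Ioi]; have := hy.1; linarith [hy.1])
    have hderivs : ∀ ξ ∈ Set.Ioo (t/2) t, HasDerivAt (deriv F) (deriv (deriv F) ξ) ξ := by
      intro ξ hξ
      have hξ0 : (0:ℝ) < ξ := by linarith [hξ.1]
      exact ((hdF.contDiffAt (Ioi_mem_nhds hξ0)).differentiableAt one_ne_zero).hasDerivAt
    obtain ⟨ξ, hξmem, hξeq⟩ :=
      exists_hasDerivAt_eq_slope (deriv F) (deriv (deriv F)) (by linarith : t/2 < t) hcont hderivs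
    have hξ0 : (0:ℝ) < ξ := by linarith [hξmem.1]
    -- second derivative bound at ξ
    have hsd : γ₁ * (1 + ξ ^ 2) ^ ((p - 2) / 2) ≤ deriv (deriv F) ξ :=
      second_deriv_lower hn hF hξ0
    have hkey : min 1 ((2:ℝ) ^ (2 - p)) * X ≤ (1 + ξ ^ 2) ^ ((p - 2) / 2) :=
      key_rpow_bound ht hξmem.1.le hξmem.2.le
    have hhalf : 0 ≤ deriv F (t/2) := deriv_F_nonneg hF (by linarith)
    -- from MVT: deriv F t - deriv F (t/2) = deriv² F ξ * (t/2)
    have hmvt : deriv F t - deriv F (t/2) = deriv (deriv F) ξ * (t/2) := by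
      rw [hξeq]
      have h2 : t - t/2 = t/2 := by ring
      rw [h2, div_mul_cancel₀ _ (by linarith : (t:ℝ)/2 ≠ 0)]
    have hFt : γ₁ * (min 1 ((2:ℝ) ^ (2 - p)) * X) * (t/2) ≤ deriv F t := by
      have h1 : γ₁ * (min 1 ((2:ℝ) ^ (2 - p)) * X) ≤ deriv (deriv F) ξ := by
        calc γ₁ * (min 1 ((2:ℝ) ^ (2 - p)) * X) ≤ γ₁ * (1 + ξ ^ 2) ^ ((p - 2) / 2) :=
              mul_le_mul_of_nonneg_left hkey hγ.le
          _ ≤ _ := hsd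
      nlinarith
    -- compute frobInner (stress F B) B
    have hfi : frobInner (stress F B) B = deriv F t * t := by
      rw [stress, if_neg hB0, frobInner_smul_left, ← sq_frobNorm, ← htdef]
      field_simp
    rw [hfi]
    have := mul_le_mul_of_nonneg_right hFt ht.le
    calc min 1 ((2:ℝ) ^ (2 - p)) / 2 * γ₁ * X * t ^ 2
        = γ₁ * (min 1 ((2:ℝ) ^ (2 - p)) * X) * (t/2) * t := by ring
      _ ≤ deriv F t * t := this
end
end
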